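/- Let F be a string-net tensor satisfying the pentagon identity, unitarity, tetrahedral symmetry, normalization, and physicality, with all d_i > 0. Then for all string types i,j,m,m' the orthogonality relation Σ_n F^{ijm}_{kln} (F^{ijm'}_{kln})* · δ_{iln} δ_{jkn*} = δ_{mm'} δ_{ijm} δ_{klm*} holds whenever δ_{ijm} δ_{klm*} = 1 or δ_{ijm'} δ_{klm'*} = 1; i.e., the matrix [F^{ij}_{kl}]_{mn} restricted to allowed internal labels is unitary. -/

import Mathlib

open scoped BigOperators

/-- For a string-net tensor `F` satisfying the pentagon identity, unitarity,
tetrahedral symmetry, normalization and physicality, with all `d_i > 0`, the matrix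
`[F^{ij}_{kl}]_{mn}` restricted to allowed internal labels is unitary:
`Σ_n F^{ijm}_{kln} (F^{ijm'}_{kln})* δ_{iln} δ_{jkn*} = δ_{mm'} δ_{ijm} δ_{klm*}`
whenever `δ_{ijm} δ_{klm*} = 1` or `δ_{ijm'} δ_{klm'*} = 1`. -/
theorem stringnet_F_unitary {N : ℕ}
    (st : Fin (N + 1) → Fin (N + 1))
    (hst : ∀ i, st (st i) = i) (hst0 : st 0 = 0)
    (Δ : Fin (N + 1) → Fin (N + 1) → Fin (N + 1) → ℂ)
    (hΔ01 : ∀ i j k, Δ i j k = 0 ∨ Δ i j k = 1)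
    (hΔcyc : ∀ i j k, Δ i j k = Δ j k i)
    (hΔbr : ∀ i j, Δ i (st j) 0 = if i = j then 1 else 0)
    (F : Fin (N + 1) → Fin (N + 1) → Fin (N + 1) → Fin (N + 1) → Fin (N + 1) →
      Fin (N + 1) → ℂ)
    (d : Fin (N + 1) → ℝ)
    (hd : ∀ i, 0 < d i)
    (hdF : ∀ i, F i (st i) 0 i (st i) 0 = ((d i)⁻¹ : ℝ))
    (hphys : ∀ i j m k l n,
      F i j m k l n * Δ i j m * Δ k l (st m) = F i j m k l n * Δ i l n * Δ j k (st n))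
    (hpent : ∀ m l q k p j i s r,
      ∑ n, F m l q k p n * F j i (st p) m n s * F j s n l k r =
        F j i (st p) (st q) k r * F (st r) i (st q) m l s)
    (hun : ∀ i j m k l n, (starRingEnd ℂ) (F i j m k l n) =
      F (st i) (st j) (st m) (st k) (st l) (st n))
    (htet : ∀ i j m k l n,
      F i j m k l n = F j i m l k (st n) ∧
      F i j m k l n = F l k (st m) j i n ∧
      F i j m k l n = F i m j (st k) n l *
        (Real.sqrt (d m * d n / (d j * d l)) : ℝ))
    (hnorm : ∀ i j k, F i (st i) 0 (st j) j k =
      (Real.sqrt (d k / (d i * d j)) : ℝ) * Δ i j k) :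
    ∀ i j k l m m',
      (Δ i j m * Δ k l (st m) = 1 ∨ Δ i j m' * Δ k l (st m') = 1) →
      ∑ n, F i j m k l n * (starRingEnd ℂ) (F i j m' k l n) * Δ i l n * Δ j k (st n) =
        (if m = m' then 1 else 0) * Δ i j m * Δ k l (st m) := by
  -- basic facts
  have hstinj : Function.Injective st := fun a b h => by rw [← hst a, h, hst b]
  have hdne : ∀ a, d a ≠ 0 := fun a => (hd a).ne'
  have hΔsq : ∀ a b c, Δ a b c * Δ a b c = Δ a b c := by
    intro a b c; rcases hΔ01 a b c with h | h <;> rw [h] <;> ring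
  have hΔconj : ∀ a b c, (starRingEnd ℂ) (Δ a b c) = Δ a b c := by
    intro a b c; rcases hΔ01 a b c with h | h <;> rw [h] <;> simp
  -- d is star invariant
  have hdst : ∀ a, d (st a) = d a := by
    intro a
    have h1 := hdF a
    have h2 := (htet a (st a) 0 a (st a) 0).1
    rw [hst0] at h2
    have h3 := hdF (st a)
    rw [hst] at h3
    have h4 : ((d a)⁻¹ : ℝ) = ((d (st a))⁻¹ : ℝ) := by
      exact_mod_cast h1.symm.trans (h2.trans h3)
    exact (inv_injective h4).symm
  -- d 0 = 1
  have hd0 : d 0 = 1 := by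
    have h1 := hdF 0; rw [hst0] at h1
    have h2 := hnorm 0 0 0; rw [hst0] at h2
    have hb : Δ 0 0 0 = 1 := by
      have hb' := hΔbr 0 0; rw [hst0] at hb'; simpa using hb'
    rw [hb, mul_one] at h2
    have h3 : ((d 0)⁻¹ : ℝ) = Real.sqrt (d 0 / (d 0 * d 0)) := by
      exact_mod_cast h1.symm.trans h2
    have harg : d 0 / (d 0 * d 0) = (d 0)⁻¹ := by
      field_simp
    rw [harg] at h3
    have hx : (0:ℝ) < (d 0)⁻¹ := inv_pos.mpr (hd 0)
    have hxx : (d 0)⁻¹ * (d 0)⁻¹ = (d 0)⁻¹ := by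
      conv_lhs => rw [h3]
      exact Real.mul_self_sqrt (le_of_lt hx)
    have hone : (d 0)⁻¹ = 1 :=
      mul_right_cancel₀ (ne_of_gt hx) (hxx.trans (one_mul _).symm)
    exact inv_eq_one.mp hone
  -- Δ is symmetric under swapping first two arguments
  have hΔswap : ∀ a b c, Δ a b c = Δ b a c := by
    intro a b c
    have h1 := hnorm a b c
    have h2 := (htet a (st a) 0 (st b) b c).2.1
    rw [hst0] at h2
    have h3 := hnorm b a c
    have hne : (↑(Real.sqrt (d c / (d a * d b))) : ℂ) ≠ 0 :=
      Complex.ofReal_ne_zero.mpr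
        (Real.sqrt_pos.mpr (div_pos (hd c) (mul_pos (hd a) (hd b)))).ne'
    refine mul_left_cancel₀ hne ?_
    rw [← h1, h2, h3, mul_comm (d b) (d a)]
  -- Δ is star invariant
  have hΔstar : ∀ a b c, Δ (st a) (st b) (st c) = Δ a b c := by
    intro a b c
    have h1 := hnorm a b c
    have h2 := (htet a (st a) 0 (st b) b c).1
    have h3 := hnorm (st a) (st b) (st c)
    simp only [hst] at h3
    simp only [hdst] at h3
    have hne : (↑(Real.sqrt (d c / (d a * d b))) : ℂ) ≠ 0 :=
      Complex.ofReal_ne_zero.mpr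
        (Real.sqrt_pos.mpr (div_pos (hd c) (mul_pos (hd a) (hd b)))).ne'
    refine mul_left_cancel₀ hne ?_
    rw [← h3, ← h2, h1]
  -- composite tetrahedral symmetry (sym4)
  have hsym4 : ∀ a b c e f g, F a b c e f g = F (st e) (st b) g (st a) (st f) c := by
    intro a b c e f g
    have s1 := (htet a b c e f g).2.2
    have s2 := (htet a c b (st e) g f).1
    have s3 := (htet c a b g (st e) (st f)).2.1
    have s4 := (htet (st e) g (st b) a c (st f)).2.2
    rw [s1, s2, s3, s4]
    simp only [hdst]
    rw [mul_assoc, ← Complex.ofReal_mul, ← Real.sqrt_mul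
      (le_of_lt (div_pos (mul_pos (hd b) (hd f)) (mul_pos (hd g) (hd c))))]
    have harg : d b * d f / (d g * d c) * (d c * d g / (d b * d f)) = 1 := by
      rw [div_mul_div_comm, div_eq_one_iff_eq
        (mul_ne_zero (mul_ne_zero (hdne g) (hdne c)) (mul_ne_zero (hdne b) (hdne f)))]
      ring
    rw [harg, Real.sqrt_one, Complex.ofReal_one, mul_one]
  -- 180 degree rotation: F i j m k l n = F i* l* n* k* j* m*
  have hrot : ∀ a b c e f g,
      F a b c e f g = F (st a) (st f) (st g) (st e) (st b) (st c) := by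
    intro a b c e f g
    have r1 := (htet a b c e f g).2.1
    have r2 := (htet f e (st c) b a g).1
    have r3 := hsym4 e f (st c) a b (st g)
    exact r1.trans (r2.trans r3)
  -- conjugation as a rotation
  have hconjF : ∀ a b c e f g,
      (starRingEnd ℂ) (F a b c e f g) = F a f g e b c := by
    intro a b c e f g
    rw [hun]
    have h := hrot (st a) (st b) (st c) (st e) (st f) (st g)
    simp only [hst] at h
    exact h
  -- value of F with 0 in the top middle
  have hF0mid : ∀ x y z, F x 0 (st x) y z y = Δ x y z := by
    intro x y z
    have t := (htet x (st x) 0 (st y) y z).2.2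
    simp only [hst] at t
    rw [hnorm x y z] at t
    simp only [hdst, hd0, one_mul] at t
    have hne : (↑(Real.sqrt (d z / (d x * d y))) : ℂ) ≠ 0 :=
      Complex.ofReal_ne_zero.mpr
        (Real.sqrt_pos.mpr (div_pos (hd z) (mul_pos (hd x) (hd y)))).ne'
    exact (mul_left_cancel₀ hne (t.trans (mul_comm _ _))).symm
  -- main part
  intro i j k l m m' hyp
  -- the core orthogonality, assuming both supports
  have core : ∀ u v : Fin (N + 1), Δ i j u = 1 → Δ k l (st u) = 1 →
      Δ i j v = 1 → Δ k l (st v) = 1 →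
      ∑ n, F i j u k l n * (starRingEnd ℂ) (F i j v k l n) * Δ i l n * Δ j k (st n)
        = if u = v then 1 else 0 := by
    intro u v hu1 hu2 hv1 hv2
    have hcpos : (0:ℝ) < Real.sqrt (d l / (d k * d u)) :=
      Real.sqrt_pos.mpr (div_pos (hd l) (mul_pos (hd k) (hd u)))
    have hcne : (↑(Real.sqrt (d l / (d k * d u))) : ℂ) ≠ 0 :=
      Complex.ofReal_ne_zero.mpr hcpos.ne'
    -- per-summand identity
    have hsummand : ∀ n, F (st k) k 0 j (st j) n * F i u j (st k) n l * F i l n k j v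
        = ↑(Real.sqrt (d l / (d k * d u))) *
          (F i j u k l n * (starRingEnd ℂ) (F i j v k l n) * Δ i l n * Δ j k (st n)) := by
      intro n
      have ha : F (st k) k 0 j (st j) n
          = ↑(Real.sqrt (d n / (d k * d j))) * Δ j k (st n) := by
        have h := hnorm (st k) (st j) n
        simp only [hst] at h
        simp only [hdst] at h
        have hΔe : Δ (st k) (st j) n = Δ j k (st n) := by
          have h1 := hΔstar k j (st n)
          rw [hst] at h1
          rw [h1]
          exact hΔswap k j (st n)
        rw [hΔe] at h
        exact h
      have hb : F i j u k l n
          = F i u j (st k) n l * ↑(Real.sqrt (d u * d n / (d j * d l))) :=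
        (htet i j u k l n).2.2
      have hcj : (starRingEnd ℂ) (F i j v k l n) = F i l n k j v := hconjF i j v k l n
      have hFB : F i l n k j v * Δ i l n * Δ j k (st n) = F i l n k j v := by
        have h := hphys i j v k l n
        rw [hv1, hv2, mul_one, mul_one] at h
        have h2 := congrArg (starRingEnd ℂ) h
        simp only [map_mul, hΔconj] at h2
        rw [hcj] at h2
        exact h2.symm
      have hBΔ2 : F i l n k j v * Δ j k (st n) = F i l n k j v := by
        calc F i l n k j v * Δ j k (st n)
            = F i l n k j v * Δ i l n * Δ j k (st n) * Δ j k (st n) := by rw [hFB]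
          _ = F i l n k j v * Δ i l n * (Δ j k (st n) * Δ j k (st n)) := by ring
          _ = F i l n k j v * Δ i l n * Δ j k (st n) := by rw [hΔsq]
          _ = F i l n k j v := hFB
      have hcc : (↑(Real.sqrt (d l / (d k * d u))) : ℂ) *
          ↑(Real.sqrt (d u * d n / (d j * d l)))
          = ↑(Real.sqrt (d n / (d k * d j))) := by
        rw [← Complex.ofReal_mul]
        congr 1
        rw [← Real.sqrt_mul (le_of_lt (div_pos (hd l) (mul_pos (hd k) (hd u))))]
        congr 1
        have hk := hdne k; have hu := hdne u; have hj := hdne j; have hl := hdne l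
        field_simp
      rw [ha, hb, hcj]
      linear_combination
        (↑(Real.sqrt (d n / (d k * d j))) * F i u j (st k) n l) * hBΔ2
        - (↑(Real.sqrt (d n / (d k * d j))) * F i u j (st k) n l) * hFB
        - (F i u j (st k) n l * F i l n k j v * Δ i l n * Δ j k (st n)) * hcc
    -- pentagon specialization
    have P := hpent (st k) k 0 j (st j) i u l v
    simp only [hst, hst0] at P
    have P2 : (↑(Real.sqrt (d l / (d k * d u))) : ℂ) *
        ∑ n, F i j u k l n * (starRingEnd ℂ) (F i j v k l n) * Δ i l n * Δ j k (st n)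
        = F i u j 0 j v * F (st v) u 0 (st k) k l := by
      rw [Finset.mul_sum, ← P]
      exact Finset.sum_congr rfl fun n _ => (hsummand n).symm
    by_cases hmm : u = v
    · subst hmm
      have hR1 : F i u j 0 j u = 1 := by
        have e1 := hsym4 i u j 0 j u
        rw [hst0] at e1
        have e2 := (htet 0 (st u) u (st i) (st j) j).1
        have e3 := hF0mid (st u) (st j) (st i)
        rw [hst] at e3
        have e4 : Δ (st u) (st j) (st i) = 1 := by
          have h1 := hΔstar u j i
          rw [h1, hΔcyc u j i, hΔswap j i u, hu1]
        rw [e1, e2, e3, e4]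
      have hR2 : F (st u) u 0 (st k) k l = ↑(Real.sqrt (d l / (d k * d u))) := by
        have e1 := (htet (st u) u 0 (st k) k l).2.1
        rw [hst0] at e1
        have e2 := hnorm k (st u) l
        simp only [hst] at e2
        simp only [hdst] at e2
        have e3 : Δ k (st u) l = 1 := by
          rw [hΔcyc k (st u) l, hΔcyc (st u) l k, hΔswap l k (st u), hu2]
        rw [e1, e2, e3, mul_one]
      rw [hR1, hR2, one_mul] at P2
      rw [if_pos rfl]
      exact mul_left_cancel₀ hcne (P2.trans (mul_one _).symm)
    · have hR1 : F i u j 0 j v = 0 := by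
        have h := hphys i u j 0 j v
        have d1 : Δ i u j = 1 := by
          rw [hΔcyc i u j, hΔcyc u j i, hΔswap j i u, hu1]
        have d2 : Δ 0 j (st j) = 1 := by
          rw [hΔcyc 0 j (st j), hΔbr j j, if_pos rfl]
        have d3 : Δ u 0 (st v) = 0 := by
          rw [hΔcyc u 0 (st v), hΔcyc 0 (st v) u]
          have hb := hΔbr (st v) (st u)
          rw [hst] at hb
          rw [hb, if_neg (fun hh => hmm (hstinj hh).symm)]
        rw [d1, d2, d3, mul_one, mul_one, mul_zero] at h
        exact h
      rw [hR1, zero_mul] at P2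
      rw [if_neg hmm]
      exact (mul_eq_zero.mp P2).resolve_left hcne
  -- outer case analysis
  have h01 : ∀ a b c a' b' c', Δ a b c * Δ a' b' c' = 1 → Δ a b c = 1 ∧ Δ a' b' c' = 1 := by
    intro a b c a' b' c' hp
    rcases hΔ01 a b c with h | h
    · rw [h, zero_mul] at hp; exact absurd hp (by norm_num)
    · rcases hΔ01 a' b' c' with h' | h'
      · rw [h', mul_zero] at hp; exact absurd hp (by norm_num)
      · exact ⟨h, h'⟩
  by_cases Hm : Δ i j m * Δ k l (st m) = 1
  · by_cases Hm' : Δ i j m' * Δ k l (st m') = 1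
    · obtain ⟨a1, a2⟩ := h01 _ _ _ _ _ _ Hm
      obtain ⟨b1, b2⟩ := h01 _ _ _ _ _ _ Hm'
      rw [a1, a2, mul_one, mul_one]
      exact core m m' a1 a2 b1 b2
    · -- primed product is 0, so every summand vanishes
      have Hm'0 : Δ i j m' * Δ k l (st m') = 0 := by
        rcases hΔ01 i j m' with h | h
        · rw [h, zero_mul]
        · rcases hΔ01 k l (st m') with h' | h'
          · rw [h', mul_zero]
          · exact absurd (by rw [h, h', mul_one]) Hm'
      have hmne : m ≠ m' := by rintro rfl; exact Hm' Hm
      rw [if_neg hmne, zero_mul, zero_mul]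
      apply Finset.sum_eq_zero
      intro n _
      have h := hphys i j m' k l n
      have h0 : F i j m' k l n * Δ i l n * Δ j k (st n) = 0 := by
        calc F i j m' k l n * Δ i l n * Δ j k (st n)
            = F i j m' k l n * Δ i j m' * Δ k l (st m') := h.symm
          _ = F i j m' k l n * (Δ i j m' * Δ k l (st m')) := by ring
          _ = 0 := by rw [Hm'0, mul_zero]
      have hcjeq := congrArg (starRingEnd ℂ) h0
      simp only [map_mul, hΔconj, map_zero] at hcjeq
      calc F i j m k l n * (starRingEnd ℂ) (F i j m' k l n) * Δ i l n * Δ j k (st n)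
          = F i j m k l n *
            ((starRingEnd ℂ) (F i j m' k l n) * Δ i l n * Δ j k (st n)) := by ring
        _ = 0 := by rw [hcjeq, mul_zero]
  · -- unprimed product is 0
    have Hm'1 : Δ i j m' * Δ k l (st m') = 1 := hyp.resolve_left Hm
    have Hm0 : Δ i j m * Δ k l (st m) = 0 := by
      rcases hΔ01 i j m with h | h
      · rw [h, zero_mul]
      · rcases hΔ01 k l (st m) with h' | h'
        · rw [h', mul_zero]
        · exact absurd (by rw [h, h', mul_one]) Hm
    have hmne : m ≠ m' := by rintro rfl; exact Hm Hm'1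
    rw [if_neg hmne, zero_mul, zero_mul]
    apply Finset.sum_eq_zero
    intro n _
    have h := hphys i j m k l n
    have h0 : F i j m k l n * Δ i l n * Δ j k (st n) = 0 := by
      calc F i j m k l n * Δ i l n * Δ j k (st n)
          = F i j m k l n * Δ i j m * Δ k l (st m) := h.symm
        _ = F i j m k l n * (Δ i j m * Δ k l (st m)) := by ring
        _ = 0 := by rw [Hm0, mul_zero]
    calc F i j m k l n * (starRingEnd ℂ) (F i j m' k l n) * Δ i l n * Δ j k (st n)
        = F i j m k l n * Δ i l n * Δ j k (st n) * (starRingEnd ℂ) (F i j m' k l n) := by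
          ring
      _ = 0 := by rw [h0, zero_mul]
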